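/- arXiv:1006.5727 — 10 statements merged into one kernel-verified Lean document; each statement's English description precedes it below -/
import Mathlib

section
/- Let G be a finite group, u ∈ Aut(G), and let O be the orbit of an element x ∈ G under the twisted action g ⇀ y = g y u(g^{-1}). Then the operation y ▷ z = y · u(z y^{-1}) makes O a rack (in particular, O is closed under ▷, each left translation is bijective, and self-distributivity holds). -/
/-- For a finite group `G`, `u ∈ Aut(G)` and `x ∈ G`, the twisted
conjugacy class `O = {g x u(g)⁻¹ : g ∈ G}` with `y ▷ z = y · u(z y⁻¹)` is a rack:
`O` is closed under `▷`, each left translation is a bijection of `O`, and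
self-distributivity holds. -/
theorem twisted_conjugacy_class_is_rack {G : Type*} [Group G] [Fintype G]
    (u : G ≃* G) (x : G) :
    let O : Set G := {y | ∃ g : G, y = g * x * u g⁻¹}
    let op : G → G → G := fun y z => y * u (z * y⁻¹)
    (∀ y ∈ O, ∀ z ∈ O, op y z ∈ O) ∧
    (∀ y ∈ O, Set.BijOn (op y) O O) ∧
    (∀ y z w : G, op y (op z w) = op (op y z) (op y w)) := by
  intro O op
  have hclosed : ∀ y ∈ O, ∀ z ∈ O, op y z ∈ O := by
    rintro y ⟨g, rfl⟩ z ⟨h, rfl⟩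
    refine ⟨(g * x * u g⁻¹) * u h * x⁻¹, ?_⟩
    simp only [op, map_mul, map_inv]
    group
  refine ⟨hclosed, ?_, ?_⟩
  · intro y hy
    refine ⟨hclosed y hy, ?_, ?_⟩
    · intro a _ b _ hab
      have : u (a * y⁻¹) = u (b * y⁻¹) := by
        simpa only [op, mul_right_cancel_iff, mul_left_cancel_iff] using hab
      have := u.injective this
      exact mul_right_cancel this
    · rintro w ⟨h, rfl⟩
      refine ⟨u.symm (y⁻¹ * (h * x * u h⁻¹) * u y), ⟨u.symm (y⁻¹ * h * x), ?_⟩, ?_⟩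
      · have h1 : u (u.symm (y⁻¹ * h * x))⁻¹ = (y⁻¹ * h * x)⁻¹ := by
          rw [map_inv, MulEquiv.apply_symm_apply]
        rw [h1]
        simp only [map_mul, map_inv, MulEquiv.symm_apply_apply]
        group
      · simp only [op, map_mul, map_inv, MulEquiv.apply_symm_apply]
        group
  · intro y z w
    simp only [op, map_mul, map_inv]
    group
end

section
/- Let X be a rack and q : X × X → GL(n, ℂ) a 2-cocycle, i.e., q_{x, y ▷ z} ∘ q_{y,z} = q_{x ▷ y, x ▷ z} ∘ q_{x,z} for all x, y, z ∈ X. Let V = ℂX ⊗ ℂⁿ with basis elements e_x ⊗ v, and define c(e_x v ⊗ e_y w) = e_{x ▷ y} q_{x,y}(w) ⊗ e_x v. Then c satisfies the braid equation (c ⊗ id)(id ⊗ c)(c ⊗ id) = (id ⊗ c)(c ⊗ id)(id ⊗ c) on V ⊗ V ⊗ V. -/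
open TensorProduct

/-- The braiding `c^q` on `V = ℂX ⊗ ℂⁿ` associated to a rack `X`
and a 2-cocycle `q` of degree `n` satisfies the braid equation. -/
theorem braiding_of_rack_cocycle_satisfies_braid_equation
    {X : Type*} (op : X → X → X)
    (hbij : ∀ x : X, Function.Bijective (op x))
    (hsd : ∀ x y z : X, op x (op y z) = op (op x y) (op x z))
    (n : ℕ) (q : X → X → ((Fin n → ℂ) ≃ₗ[ℂ] (Fin n → ℂ)))
    (hq : ∀ x y z : X, ∀ w : Fin n → ℂ,
      q x (op y z) (q y z w) = q (op x y) (op x z) (q x z w))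
    (c : ((X →₀ (Fin n → ℂ)) ⊗[ℂ] (X →₀ (Fin n → ℂ))) →ₗ[ℂ]
          ((X →₀ (Fin n → ℂ)) ⊗[ℂ] (X →₀ (Fin n → ℂ))))
    (hc : ∀ (x y : X) (v w : Fin n → ℂ),
      c (Finsupp.single x v ⊗ₜ[ℂ] Finsupp.single y w) =
        Finsupp.single (op x y) (q x y w) ⊗ₜ[ℂ] Finsupp.single x v) :
    let W := (X →₀ (Fin n → ℂ))
    let c12 : (W ⊗[ℂ] W) ⊗[ℂ] W →ₗ[ℂ] (W ⊗[ℂ] W) ⊗[ℂ] W :=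
      TensorProduct.map c LinearMap.id
    let c23 : (W ⊗[ℂ] W) ⊗[ℂ] W →ₗ[ℂ] (W ⊗[ℂ] W) ⊗[ℂ] W :=
      (TensorProduct.assoc ℂ W W W).symm.toLinearMap ∘ₗ
        TensorProduct.map LinearMap.id c ∘ₗ (TensorProduct.assoc ℂ W W W).toLinearMap
    c12 ∘ₗ c23 ∘ₗ c12 = c23 ∘ₗ c12 ∘ₗ c23 := by
  intro W c12 c23
  ext x v y w z u
  simp only [c12, c23, AlgebraTensorModule.curry_apply, TensorProduct.curry_apply,
    Finsupp.lsingle_apply, LinearMap.coe_restrictScalars, LinearMap.coe_single,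
    LinearMap.coe_comp, Function.comp_apply, LinearEquiv.coe_coe,
    TensorProduct.map_tmul, LinearMap.id_coe, id_eq, TensorProduct.assoc_tmul,
    TensorProduct.assoc_symm_tmul]
  rw [hc, hc]
  simp only [TensorProduct.assoc_tmul, TensorProduct.map_tmul, LinearMap.id_coe, id_eq, hc,
    TensorProduct.assoc_symm_tmul]
  rw [hsd x y z, hq x y z (Pi.single u 1)]
end

section
/- Let X be a rack, q a ℂ^×-valued 2-cocycle on X, and φ : X × X → ℂ^× a map satisfying φ(x,z)φ(x▷y, x▷z)φ(x▷(y▷z), x)φ(y▷z, y) = φ(y,z)φ(x, y▷z)φ(x▷(y▷z), x▷y)φ(x▷z, x) for all x, y, z ∈ X. Then q^φ defined by q^φ_{x,y} = φ(x,y) φ(x ▷ y, x)^{-1} q_{x,y} is again a 2-cocycle on X. -/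
/-- Twisting a rack 2-cocycle `q` by a map `φ` satisfying the
twisting condition yields another 2-cocycle `q^φ_{x,y} = φ(x,y) φ(x▷y,x)⁻¹ q_{x,y}`. -/
theorem twisted_cocycle_is_cocycle {X : Type*} (op : X → X → X)
    (hbij : ∀ x : X, Function.Bijective (op x))
    (hsd : ∀ x y z : X, op x (op y z) = op (op x y) (op x z))
    (q : X → X → ℂˣ)
    (hq : ∀ x y z : X, q x (op y z) * q y z = q (op x y) (op x z) * q x z)
    (φ : X → X → ℂˣ)
    (hφ : ∀ x y z : X,
      φ x z * φ (op x y) (op x z) * φ (op x (op y z)) x * φ (op y z) y =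
        φ y z * φ x (op y z) * φ (op x (op y z)) (op x y) * φ (op x z) x) :
    ∀ x y z : X,
      (φ x (op y z) * (φ (op x (op y z)) x)⁻¹ * q x (op y z)) *
        (φ y z * (φ (op y z) y)⁻¹ * q y z) =
      (φ (op x y) (op x z) * (φ (op (op x y) (op x z)) (op x y))⁻¹ *
          q (op x y) (op x z)) *
        (φ x z * (φ (op x z) x)⁻¹ * q x z) := by
  intro x y z
  rw [← hsd x y z]
  have h1 := congrArg Units.val (hq x y z)
  have h2 := congrArg Units.val (hφ x y z)
  push_cast at h1 h2
  apply Units.ext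
  push_cast [Units.val_inv_eq_inv_val]
  field_simp
  linear_combination (φ (op x (op y z)) (op x y) : ℂ) * (φ (op x z) x) * (φ x (op y z)) * (φ y z) * h1 - (q (op x y) (op x z) : ℂ) * (q x z) * h2
end

section
/- Let X be a subrack of a group G (under conjugation) and φ ∈ Z²(G, ℂ^×) a group 2-cocycle, i.e., φ(g,h)φ(gh,t) = φ(h,t)φ(g,ht) and φ(g,e) = φ(e,g) = 1 for all g,h,t ∈ G. Then the restriction of φ to X × X satisfies the rack twisting condition: φ(x,z)φ(x▷y, x▷z)φ(x▷(y▷z), x)φ(y▷z, y) = φ(y,z)φ(x, y▷z)φ(x▷(y▷z), x▷y)φ(x▷z, x) for all x, y, z ∈ X, where x ▷ y = xyx^{-1}. -/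
/-- The restriction of a group 2-cocycle `φ ∈ Z²(G, ℂˣ)` to a
subrack `X` of `G` (under conjugation `x ▷ y = x y x⁻¹`) satisfies the rack
twisting condition. -/
theorem group_cocycle_restriction_satisfies_twisting {G : Type*} [Group G]
    (X : Set G) (hX : ∀ x ∈ X, ∀ y ∈ X, x * y * x⁻¹ ∈ X)
    (φ : G → G → ℂˣ)
    (hco : ∀ g h t : G, φ g h * φ (g * h) t = φ h t * φ g (h * t))
    (hu : ∀ g : G, φ g 1 = 1 ∧ φ 1 g = 1)
    (op : G → G → G) (hop : ∀ a b : G, op a b = a * b * a⁻¹) :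
    ∀ x ∈ X, ∀ y ∈ X, ∀ z ∈ X,
      φ x z * φ (op x y) (op x z) * φ (op x (op y z)) x * φ (op y z) y =
        φ y z * φ x (op y z) * φ (op x (op y z)) (op x y) * φ (op x z) x := by
  intro x hx y hy z hz
  simp only [hop]
  -- six instances of the cocycle identity, with group arguments normalized
  have h1 := hco x y z
  have h2 := hco x (y * z * y⁻¹) y
  rw [show (y * z * y⁻¹) * y = y * z from by group] at h2
  have h3 := hco (x * (y * z * y⁻¹) * x⁻¹) x y
  rw [show (x * (y * z * y⁻¹) * x⁻¹) * x = x * (y * z * y⁻¹) from by group] at h3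
  have h4 := hco (x * y * x⁻¹) x z
  rw [show (x * y * x⁻¹) * x = x * y from by group] at h4
  have h5 := hco (x * y * x⁻¹) (x * z * x⁻¹) x
  rw [show (x * y * x⁻¹) * (x * z * x⁻¹) = x * (y * z) * x⁻¹ from by group,
      show (x * z * x⁻¹) * x = x * z from by group] at h5
  have h6 := hco (x * (y * z * y⁻¹) * x⁻¹) (x * y * x⁻¹) x
  rw [show (x * (y * z * y⁻¹) * x⁻¹) * (x * y * x⁻¹) = x * (y * z) * x⁻¹ from by group,
      show (x * y * x⁻¹) * x = x * y from by group] at h6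
  -- pass to ℂ
  rw [Units.ext_iff]
  have c1 := congrArg Units.val h1
  have c2 := congrArg Units.val h2
  have c3 := congrArg Units.val h3
  have c4 := congrArg Units.val h4
  have c5 := congrArg Units.val h5
  have c6 := congrArg Units.val h6
  simp only [Units.val_mul] at c1 c2 c3 c4 c5 c6 ⊢
  set A := (φ x y : ℂ)
  set B := (φ (x * y) z : ℂ)
  set C := (φ y z : ℂ)
  set D := (φ x (y * z) : ℂ)
  set E := (φ x (y * z * y⁻¹) : ℂ)
  set F := (φ (x * (y * z * y⁻¹)) y : ℂ)
  set Gv := (φ (y * z * y⁻¹) y : ℂ)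
  set H := (φ (x * (y * z * y⁻¹) * x⁻¹) x : ℂ)
  set K := (φ (x * (y * z * y⁻¹) * x⁻¹) (x * y) : ℂ)
  set P := (φ (x * y * x⁻¹) x : ℂ)
  set Q := (φ x z : ℂ)
  set R := (φ (x * y * x⁻¹) (x * z) : ℂ)
  set S := (φ (x * y * x⁻¹) (x * z * x⁻¹) : ℂ)
  set T := (φ (x * (y * z) * x⁻¹) x : ℂ)
  set W := (φ (x * z * x⁻¹) x : ℂ)
  set V := (φ (x * (y * z * y⁻¹) * x⁻¹) (x * y * x⁻¹) : ℂ)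
  have hne : A * F * T * R ≠ 0 := by
    simp [A, F, T, R, Units.ne_zero]
  refine mul_left_cancel₀ hne ?_
  linear_combination (A*Gv*K*P*R*W) * c1 - (A*C*K*P*R*W) * c2
    + (A*Gv*Q*R*S*T) * c3 - (A*A*Gv*K*R*W) * c4
    + (A*A*Gv*K*Q*R) * c5 - (A*C*E*F*R*W) * c6
end

section
/- Let q = p^t be a prime power, a a generator of the multiplicative group 𝔽_q^×, and consider the affine rack Q on 𝔽_q with x ▷ y = (1 − a)x + a y. Then any subrack X of Q with more than one element equals Q; i.e., every proper subrack is a singleton. -/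
/-- If `a` generates `𝔽_qˣ`, then any subrack of the affine rack
`(𝔽_q, x ▷ y = (1−a)x + ay)` with more than one element is the whole rack. -/
theorem affine_rack_generator_subracks_trivial
    {F : Type*} [Field F] [Fintype F] (a : Fˣ)
    (ha : ∀ u : Fˣ, u ∈ Subgroup.zpowers a) :
    ∀ X : Set F, (∀ x ∈ X, ∀ y ∈ X, (1 - (a : F)) * x + (a : F) * y ∈ X) →
      ∀ x ∈ X, ∀ y ∈ X, x ≠ y → X = Set.univ := by
  intro X hX x hx y hy hxy
  have key : ∀ n : ℕ, (1 - (a : F) ^ n) * x + (a : F) ^ n * y ∈ X := by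
    intro n
    induction n with
    | zero => simpa using hy
    | succ n ih =>
      have h := hX x hx _ ih
      convert h using 1
      ring
  ext z
  simp only [Set.mem_univ, iff_true]
  by_cases hz : z = x
  · exact hz ▸ hx
  · have hyx0 : y - x ≠ 0 := sub_ne_zero.mpr (Ne.symm hxy)
    have hzx0 : z - x ≠ 0 := sub_ne_zero.mpr hz
    have hq : (z - x) / (y - x) ≠ 0 := div_ne_zero hzx0 hyx0
    obtain ⟨n, hn⟩ := (Submonoid.mem_powers_iff _ _).mp
      ((mem_powers_iff_mem_zpowers).mpr (ha (Units.mk0 _ hq)))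
    have hu : (a : F) ^ n = (z - x) / (y - x) := by
      have := congrArg Units.val hn
      simpa using this
    have h2 := key n
    have heq : (1 - (a : F) ^ n) * x + (a : F) ^ n * y = z := by
      rw [hu]
      field_simp
      ring
    rwa [heq] at h2
end

section
/- Let p be a prime and a ∈ 𝔽_p^× with a ≠ 1. Then any proper subrack of the affine rack (𝔽_p, ▷) with x ▷ y = (1 − a)x + a y has at most one element; equivalently, any two distinct elements x ≠ y of 𝔽_p generate the whole rack 𝔽_p. -/
/-- For a prime `p` and `a ∈ 𝔽_pˣ`, `a ≠ 1`, any two distinct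
elements of the affine rack `(𝔽_p, x ▷ y = (1−a)x + ay)` generate the whole
rack: any subset containing them and closed under `▷` and `▷⁻¹` is everything.
Equivalently, every proper subrack has at most one element. -/
theorem affine_rack_Fp_proper_subracks_trivial
    (p : ℕ) [Fact p.Prime] (a : ZMod p) (ha0 : a ≠ 0) (ha1 : a ≠ 1) :
    ∀ X : Set (ZMod p),
      (∀ u ∈ X, ∀ v ∈ X, (1 - a) * u + a * v ∈ X) →
      (∀ u ∈ X, ∀ v ∈ X, a⁻¹ * (v - (1 - a) * u) ∈ X) →
      ∀ x ∈ X, ∀ y ∈ X, x ≠ y → X = Set.univ := by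
  intro X h1 h2 x hx y hy hxy
  set t : ZMod p := a⁻¹ * (1 - a) * (x - y) with ht
  have ha1' : (1 : ZMod p) - a ≠ 0 := sub_ne_zero.mpr (Ne.symm ha1)
  have hxy' : x - y ≠ 0 := sub_ne_zero.mpr hxy
  have htne : t ≠ 0 := by
    apply mul_ne_zero (mul_ne_zero (inv_ne_zero ha0) ha1') hxy'
  -- X is closed under adding t
  have step : ∀ z ∈ X, z + t ∈ X := by
    intro z hz
    have hw : (1 - a) * x + a * z ∈ X := h1 x hx z hz
    have := h2 y hy _ hw
    have heq : a⁻¹ * (((1 - a) * x + a * z) - (1 - a) * y) = z + t := by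
      rw [ht]
      field_simp
      ring
    rwa [heq] at this
  have hnat : ∀ n : ℕ, x + n * t ∈ X := by
    intro n
    induction n with
    | zero => simpa using hx
    | succ n ih =>
        have := step _ ih
        push_cast
        convert this using 1
        ring
  ext z
  simp only [Set.mem_univ, iff_true]
  have : x + (((z - x) * t⁻¹).val : ZMod p) * t = z := by
    rw [ZMod.natCast_val, ZMod.cast_id]
    field_simp
    ring
  rw [← this]
  exact hnat _
end

section
/- Let q = p^m with q ≡ 1 (mod 4) and q > 9. Then the conjugacy class of involutions in PSL(2, 𝔽_q) contains a subrack isomorphic to the dihedral rack D_{(q−1)/2}, and hence is of type D. -/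
open Matrix

namespace PSL2Aux

instance factEven2 : Fact (Even (Fintype.card (Fin 2))) := ⟨by simp⟩

variable {F : Type*} [Field F]

/-- the anti-diagonal involution matrix -/
def MM (u : Fˣ) : Matrix.SpecialLinearGroup (Fin 2) F :=
  ⟨!![0, (u : F); -((u : F))⁻¹, 0], by
    simp [Matrix.det_fin_two_of, mul_inv_cancel₀ u.ne_zero]⟩

lemma MM_neg (u : Fˣ) : MM (-u) = -(MM u) := by
  apply Subtype.ext
  rw [Matrix.SpecialLinearGroup.coe_neg]
  show !![0, ((-u : Fˣ) : F); -(((-u : Fˣ) : F))⁻¹, 0] = -(!![0, (u:F); -((u:F))⁻¹, 0])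
  ext i j
  fin_cases i <;> fin_cases j <;> simp [inv_neg]

lemma MM_inj : Function.Injective (MM (F := F)) := by
  intro u v h
  have := congr_fun₂ (congrArg Subtype.val h) 0 1
  simp [MM] at this
  exact Units.ext this

lemma MM_sq (u : Fˣ) : MM u * MM u = -(1 : Matrix.SpecialLinearGroup (Fin 2) F) := by
  apply Subtype.ext
  rw [Matrix.SpecialLinearGroup.coe_mul, Matrix.SpecialLinearGroup.coe_neg,
    Matrix.SpecialLinearGroup.coe_one]
  show !![0, (u:F); -((u:F))⁻¹, 0] * !![0, (u:F); -((u:F))⁻¹, 0] = -(1 : Matrix (Fin 2) (Fin 2) F)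
  rw [Matrix.mul_fin_two]
  ext i j
  fin_cases i <;> fin_cases j <;>
    simp [Matrix.one_apply, mul_inv_cancel₀ u.ne_zero, inv_mul_cancel₀ u.ne_zero]

lemma MM_semiconj (u v : Fˣ) :
    MM u * MM v = MM (u ^ 2 * v⁻¹) * MM u := by
  apply Subtype.ext
  rw [Matrix.SpecialLinearGroup.coe_mul, Matrix.SpecialLinearGroup.coe_mul]
  show !![0, (u:F); -((u:F))⁻¹, 0] * !![0, (v:F); -((v:F))⁻¹, 0]
      = !![0, ((u ^ 2 * v⁻¹ : Fˣ):F); -(((u ^ 2 * v⁻¹ : Fˣ):F))⁻¹, 0] *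
        !![0, (u:F); -((u:F))⁻¹, 0]
  have hu : (u : F) ≠ 0 := u.ne_zero
  have hv : (v : F) ≠ 0 := v.ne_zero
  push_cast
  rw [Matrix.mul_fin_two, Matrix.mul_fin_two]
  ext i j
  fin_cases i <;> fin_cases j <;> field_simp <;> ring

lemma MM_conj (u v : Fˣ) :
    MM u * MM v * (MM u)⁻¹ = MM (u ^ 2 * v⁻¹) := by
  rw [mul_inv_eq_iff_eq_mul]
  exact MM_semiconj u v

end PSL2Aux

namespace PSL2Aux

variable {F : Type*} [Field F]

lemma neg_one_mem_center :
    (-1 : Matrix.SpecialLinearGroup (Fin 2) F) ∈ Subgroup.center _ :=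
  Subgroup.mem_center_iff.mpr fun B => by rw [mul_neg_one, neg_one_mul]

lemma mem_center_cases {z : Matrix.SpecialLinearGroup (Fin 2) F}
    (hz : z ∈ Subgroup.center _) : z = 1 ∨ z = -1 := by
  obtain ⟨r, hr, hs⟩ := Matrix.SpecialLinearGroup.mem_center_iff.mp hz
  rw [Fintype.card_fin, sq] at hr
  rcases mul_self_eq_one_iff.mp hr with rfl | rfl
  · left
    apply Subtype.ext
    rw [← hs]
    simp
  · right
    apply Subtype.ext
    rw [← hs, Matrix.SpecialLinearGroup.coe_neg, Matrix.SpecialLinearGroup.coe_one,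
      Matrix.scalar_apply]
    ext i j
    by_cases h : i = j <;> simp [Matrix.diagonal_apply, Matrix.one_apply, h]

/-- the diagonal involution -/
def JJ (i : F) (hi : i * i = -1) : Matrix.SpecialLinearGroup (Fin 2) F :=
  ⟨!![i, 0; 0, -i], by simp [Matrix.det_fin_two_of]; linear_combination -hi⟩

lemma isConj_JJ (two_ne : (2 : F) ≠ 0) (i : F) (hi : i * i = -1)
    (A : Matrix.SpecialLinearGroup (Fin 2) F)
    (hA : A * A = -1) : IsConj (JJ i hi) A := by
  have hine : i ≠ 0 := by
    intro h
    rw [h, mul_zero] at hi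
    exact one_ne_zero (neg_eq_zero.mp hi.symm)
  revert hA
  induction A using Matrix.SpecialLinearGroup.fin_two_induction with
  | _ a b c d hdet =>
  intro hA
  have hAm := congrArg Subtype.val hA
  erw [Matrix.SpecialLinearGroup.coe_mul, Matrix.SpecialLinearGroup.coe_neg,
    Matrix.SpecialLinearGroup.coe_one] at hAm
  simp only [Matrix.mul_fin_two] at hAm
  have e00 : a * a + b * c = -1 := by have := congr_fun₂ hAm 0 0; simpa using this
  have e01 : a * b + b * d = 0 := by have := congr_fun₂ hAm 0 1; simpa using this
  have e10 : c * a + d * c = 0 := by have := congr_fun₂ hAm 1 0; simpa using this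
  have e11 : c * b + d * d = -1 := by have := congr_fun₂ hAm 1 1; simpa using this
  -- trace is zero
  have htr : d = -a := by
    rcases eq_or_ne (a + d) 0 with h | h
    · linear_combination h
    · have hb : b = 0 := by
        rcases mul_eq_zero.mp (show b * (a + d) = 0 by linear_combination e01) with h' | h'
        · exact h'
        · exact absurd h' h
      have hc : c = 0 := by
        rcases mul_eq_zero.mp (show c * (a + d) = 0 by linear_combination e10) with h' | h'
        · exact h'
        · exact absurd h' h
      exfalso
      apply h
      have h2 : (a + d) * (a + d) = 0 := by
        rw [hb, hc] at e00 e11 hdet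
        linear_combination e00 + e11 + 2 * hdet
      exact mul_self_eq_zero.mp h2
  subst htr
  apply isConj_iff.mpr
  rcases eq_or_ne b 0 with hb | hb
  · -- b = 0, so a * a = -1
    subst hb
    have ha2 : (a - i) * (a + i) = 0 := by linear_combination e00 - hi
    rcases mul_eq_zero.mp ha2 with ha | ha
    · have ha : a = i := by linear_combination ha
      subst ha
      refine ⟨⟨!![1, 0; c * (2 * a)⁻¹, 1], by
        rw [Matrix.det_fin_two_of]; ring⟩, ?_⟩
      apply mul_inv_eq_iff_eq_mul.mpr
      apply Subtype.ext
      erw [Matrix.SpecialLinearGroup.coe_mul, Matrix.SpecialLinearGroup.coe_mul]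
      show !![1, 0; c * (2 * a)⁻¹, 1] * !![a, 0; 0, -a]
          = !![a, 0; c, -a] * !![1, 0; c * (2 * a)⁻¹, 1]
      rw [Matrix.mul_fin_two, Matrix.mul_fin_two]
      ext x y
      fin_cases x <;> fin_cases y <;> simp <;> field_simp <;> ring
    · have ha : a = -i := by linear_combination ha
      subst ha
      refine ⟨⟨!![0, 1; -1, -(c * (2 * i)⁻¹)], by
        rw [Matrix.det_fin_two_of]; ring⟩, ?_⟩
      apply mul_inv_eq_iff_eq_mul.mpr
      apply Subtype.ext
      erw [Matrix.SpecialLinearGroup.coe_mul, Matrix.SpecialLinearGroup.coe_mul]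
      show !![0, 1; -1, -(c * (2 * i)⁻¹)] * !![i, 0; 0, -i]
          = !![-i, 0; c, - -i] * !![0, 1; -1, -(c * (2 * i)⁻¹)]
      rw [Matrix.mul_fin_two, Matrix.mul_fin_two]
      ext x y
      fin_cases x <;> fin_cases y <;> simp <;> field_simp <;> ring
  · -- b ≠ 0
    refine ⟨⟨!![b, b * (-(2 * b * i)⁻¹); i - a, (-i - a) * (-(2 * b * i)⁻¹)], by
      rw [Matrix.det_fin_two_of]
      field_simp
      ring⟩, ?_⟩
    apply mul_inv_eq_iff_eq_mul.mpr
    apply Subtype.ext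
    erw [Matrix.SpecialLinearGroup.coe_mul, Matrix.SpecialLinearGroup.coe_mul]
    show !![b, b * (-(2 * b * i)⁻¹); i - a, (-i - a) * (-(2 * b * i)⁻¹)] * !![i, 0; 0, -i]
        = !![a, b; c, -a] *
          !![b, b * (-(2 * b * i)⁻¹); i - a, (-i - a) * (-(2 * b * i)⁻¹)]
    rw [Matrix.mul_fin_two, Matrix.mul_fin_two]
    ext x y
    fin_cases x <;> fin_cases y <;> simp
    · ring
    · ring
    · linear_combination hi - e00
    · linear_combination (-(2 * b * i)⁻¹) * hi - (-(2 * b * i)⁻¹) * e00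

end PSL2Aux

namespace PSL2Aux

variable {F : Type*} [Field F]

lemma sq_eq_one_cases (two_ne : (2 : F) ≠ 0)
    (A : Matrix.SpecialLinearGroup (Fin 2) F) (hA : A * A = 1) :
    A = 1 ∨ A = -1 := by
  revert hA
  induction A using Matrix.SpecialLinearGroup.fin_two_induction with
  | _ a b c d hdet =>
  intro hA
  have hAm := congrArg Subtype.val hA
  erw [Matrix.SpecialLinearGroup.coe_mul, Matrix.SpecialLinearGroup.coe_one] at hAm
  simp only [Matrix.mul_fin_two] at hAm
  have e00 : a * a + b * c = 1 := by have := congr_fun₂ hAm 0 0; simpa [Matrix.one_apply] using this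
  have e01 : a * b + b * d = 0 := by have := congr_fun₂ hAm 0 1; simpa [Matrix.one_apply] using this
  have e10 : c * a + d * c = 0 := by have := congr_fun₂ hAm 1 0; simpa [Matrix.one_apply] using this
  have e11 : c * b + d * d = 1 := by have := congr_fun₂ hAm 1 1; simpa [Matrix.one_apply] using this
  have htr : a + d ≠ 0 := by
    intro h
    have hd : d = -a := by linear_combination h
    subst hd
    apply two_ne
    linear_combination -e00 - hdet
  have hb : b = 0 := by
    rcases mul_eq_zero.mp (show b * (a + d) = 0 by linear_combination e01) with h' | h'
    · exact h'
    · exact absurd h' htr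
  have hc : c = 0 := by
    rcases mul_eq_zero.mp (show c * (a + d) = 0 by linear_combination e10) with h' | h'
    · exact h'
    · exact absurd h' htr
  subst hb; subst hc
  have ha : a = 1 ∨ a = -1 := by
    apply mul_self_eq_one_iff.mp
    linear_combination e00
  have hane : a ≠ 0 := by rcases ha with rfl | rfl <;> intro h <;> simp at h
  have hd : d = a := by
    have : a * (d - a) = 0 := by linear_combination hdet - e00
    rcases mul_eq_zero.mp this with h' | h'
    · exact absurd h' hane
    · linear_combination h'
  subst hd
  rcases ha with rfl | rfl
  · left
    apply Subtype.ext
    rw [Matrix.SpecialLinearGroup.coe_one]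
    ext x y
    fin_cases x <;> fin_cases y <;> simp [Matrix.one_apply]
  · right
    apply Subtype.ext
    rw [Matrix.SpecialLinearGroup.coe_neg, Matrix.SpecialLinearGroup.coe_one]
    ext x y
    fin_cases x <;> fin_cases y <;> simp [Matrix.one_apply]

end PSL2Aux


open PSL2Aux

/-- A subset `X` of a rack `(G, op)` is of type D if it contains a decomposable
subrack `Y = R ⊔ S` with `r ▷ (s ▷ (r ▷ s)) ≠ s` for some `r ∈ R`, `s ∈ S`. -/
def IsTypeD {G : Type*} (op : G → G → G) (X : Set G) : Prop :=
  ∃ R S : Set G, R ⊆ X ∧ S ⊆ X ∧ R.Nonempty ∧ S.Nonempty ∧ Disjoint R S ∧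
    (∀ a ∈ R, ∀ b ∈ R, op a b ∈ R) ∧ (∀ a ∈ S, ∀ b ∈ S, op a b ∈ S) ∧
    (∀ a ∈ R, ∀ b ∈ S, op a b ∈ S) ∧ (∀ a ∈ S, ∀ b ∈ R, op a b ∈ R) ∧
    ∃ r ∈ R, ∃ s ∈ S, op r (op s (op r s)) ≠ s

/-- For `q ≡ 1 (mod 4)`, `q > 9`, the conjugacy class of
involutions in `PSL(2, 𝔽_q)` contains a subrack isomorphic to the dihedral rack
`D_{(q−1)/2}` and is of type D. -/
theorem psl2_involutions_typeD {F : Type*} [Field F] [Fintype F]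
    (hq : Fintype.card F % 4 = 1) (h9 : 9 < Fintype.card F) :
    ∀ g : Matrix.SpecialLinearGroup (Fin 2) F ⧸
        Subgroup.center (Matrix.SpecialLinearGroup (Fin 2) F),
      g ≠ 1 → g ^ 2 = 1 →
      (∃ f : ZMod ((Fintype.card F - 1) / 2) →
          Matrix.SpecialLinearGroup (Fin 2) F ⧸
            Subgroup.center (Matrix.SpecialLinearGroup (Fin 2) F),
        Function.Injective f ∧ (∀ x, IsConj g (f x)) ∧
        (∀ x y, f x * f y * (f x)⁻¹ = f (2 * x - y))) ∧
      IsTypeD (fun a b => a * b * a⁻¹) {h | IsConj g h} := by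
  classical
  intro g hg1 hg2
  set q := Fintype.card F with hqdef
  set N := (q - 1) / 2 with hNdef
  have hq13 : 13 ≤ q := by omega
  have hN2 : 2 * N = q - 1 := by omega
  have hN6 : 6 ≤ N := by omega
  haveI : NeZero N := ⟨by omega⟩
  have hchar : ringChar F ≠ 2 := by
    rw [Ne, FiniteField.even_card_iff_char_two]
    omega
  have two_ne : (2 : F) ≠ 0 := Ring.two_ne_zero hchar
  obtain ⟨i, hi⟩ := FiniteField.isSquare_neg_one_iff.mpr
    (show Fintype.card F % 4 ≠ 3 by omega)
  replace hi : i * i = -1 := hi.symm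
  obtain ⟨ζ, hζ⟩ := IsCyclic.exists_generator (α := Fˣ)
  have hord : orderOf ζ = q - 1 := by
    rw [orderOf_eq_card_of_forall_mem_zpowers hζ, Nat.card_eq_fintype_card,
      Fintype.card_units]
  have hzN : ζ ^ N = -1 := by
    have h0 : (ζ ^ N : Fˣ) * (ζ ^ N) = 1 := by
      rw [← pow_add, show N + N = q - 1 by omega, ← hord]
      exact pow_orderOf_eq_one ζ
    have h1 : ((ζ : F) ^ N) * ((ζ : F) ^ N) = 1 := by
      have := congrArg Units.val h0
      push_cast at this
      exact this
    rcases mul_self_eq_one_iff.mp h1 with h2 | h2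
    · exfalso
      have h3 : ζ ^ N = 1 := Units.ext (by push_cast; exact h2)
      have : orderOf ζ ∣ N := orderOf_dvd_of_pow_eq_one h3
      rw [hord] at this
      have := Nat.le_of_dvd (by omega) this
      omega
    · exact Units.ext (by push_cast; exact h2)
  -- the quotient map
  set π : Matrix.SpecialLinearGroup (Fin 2) F →*
      (Matrix.SpecialLinearGroup (Fin 2) F ⧸
        Subgroup.center (Matrix.SpecialLinearGroup (Fin 2) F)) :=
    QuotientGroup.mk' _ with hπdef
  have hπ_neg_one : π (-1) = 1 :=
    (QuotientGroup.eq_one_iff _).mpr neg_one_mem_center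
  have hπ_neg : ∀ B : Matrix.SpecialLinearGroup (Fin 2) F, π (-B) = π B := by
    intro B
    rw [show -B = B * (-1) by rw [mul_neg_one], _root_.map_mul, hπ_neg_one, mul_one]
  -- the rack map
  set f : ZMod N → (Matrix.SpecialLinearGroup (Fin 2) F ⧸
      Subgroup.center (Matrix.SpecialLinearGroup (Fin 2) F)) :=
    fun x => π (MM (ζ ^ ((x.val : ℤ)))) with hfdef
  have hMMcong : ∀ j k : ℤ, ((j : ZMod N) = (k : ZMod N)) →
      π (MM (ζ ^ j)) = π (MM (ζ ^ k)) := by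
    intro j k h
    obtain ⟨t, ht⟩ := ((ZMod.intCast_eq_intCast_iff _ _ _).mp h).dvd
    have hk : k = j + (N : ℤ) * t := by linarith
    subst hk
    rw [_root_.zpow_add, _root_.zpow_mul, zpow_natCast, hzN]
    rcases Int.even_or_odd t with ⟨s, rfl⟩ | ⟨s, rfl⟩
    · rw [show ((-1 : Fˣ)) ^ (s + s) = 1 from by
        rw [_root_.zpow_add, ← mul_zpow]; simp, mul_one]
    · rw [show ((-1 : Fˣ)) ^ (2 * s + 1) = -1 from by
        rw [show (2 * s + 1 : ℤ) = s + s + 1 by ring, _root_.zpow_add,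
          _root_.zpow_add, ← mul_zpow, zpow_one]
        simp, mul_neg_one, MM_neg]
      exact (hπ_neg _).symm
  have hparse : ∀ u v : Fˣ, π (MM u) = π (MM v) → v = u ∨ v = -u := by
    intro u v h
    have h' : (MM u)⁻¹ * MM v ∈
        Subgroup.center (Matrix.SpecialLinearGroup (Fin 2) F) := by
      rw [← QuotientGroup.eq]
      exact h
    rcases mem_center_cases h' with hz | hz
    · left
      exact (MM_inj (inv_mul_eq_one.mp hz)).symm
    · right
      have hMMv : MM v = MM (-u) := by
        rw [MM_neg, show -(MM u) = MM u * (-1) by rw [mul_neg_one], ← hz,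
          mul_inv_cancel_left]
      exact MM_inj hMMv
  have hf_inj : Function.Injective f := by
    intro x y h
    have hx := ZMod.val_lt x
    have hy := ZMod.val_lt y
    rcases hparse _ _ h with h1 | h1
    · rw [zpow_natCast, zpow_natCast] at h1
      have hmod := pow_eq_pow_iff_modEq.mp h1
      rw [hord] at hmod
      rw [Nat.ModEq, Nat.mod_eq_of_lt (by omega), Nat.mod_eq_of_lt (by omega)] at hmod
      exact (ZMod.val_injective N hmod).symm
    · exfalso
      rw [zpow_natCast, zpow_natCast] at h1
      have h2 : ζ ^ (y.val) = ζ ^ (N + x.val) := by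
        rw [pow_add, hzN, h1, neg_one_mul]
      have hmod := pow_eq_pow_iff_modEq.mp h2
      rw [hord] at hmod
      rw [Nat.ModEq, Nat.mod_eq_of_lt (by omega), Nat.mod_eq_of_lt (by omega)] at hmod
      omega
  have hf_rack : ∀ x y, f x * f y * (f x)⁻¹ = f (2 * x - y) := by
    intro x y
    show π (MM (ζ ^ ((x.val : ℤ)))) * π (MM (ζ ^ ((y.val : ℤ)))) *
        (π (MM (ζ ^ ((x.val : ℤ)))))⁻¹ = π (MM (ζ ^ (((2 * x - y).val : ℤ))))
    rw [← _root_.map_inv, ← _root_.map_mul, ← _root_.map_mul, MM_conj]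
    have hz : (ζ ^ ((x.val : ℤ))) ^ 2 * (ζ ^ ((y.val : ℤ)))⁻¹
        = ζ ^ (2 * (x.val : ℤ) - (y.val : ℤ)) := by
      group
    rw [hz]
    apply hMMcong
    push_cast
    simp [ZMod.natCast_val, ZMod.cast_id]
  -- lift g
  obtain ⟨A, rfl⟩ := QuotientGroup.mk'_surjective
    (Subgroup.center (Matrix.SpecialLinearGroup (Fin 2) F)) g
  have hA2 : A * A = -1 := by
    have h1 : π (A * A) = 1 := by
      rw [_root_.map_mul, ← pow_two]
      exact hg2
    have hcen : A * A ∈ Subgroup.center (Matrix.SpecialLinearGroup (Fin 2) F) :=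
      (QuotientGroup.eq_one_iff _).mp h1
    rcases mem_center_cases hcen with h2 | h2
    · exfalso
      apply hg1
      rcases sq_eq_one_cases two_ne A h2 with rfl | rfl
      · exact _root_.map_one π
      · exact hπ_neg_one
    · exact h2
  have hconjA : IsConj (JJ i hi) A := isConj_JJ two_ne i hi A hA2
  have hconj : ∀ x : ZMod N, IsConj (π A) (f x) := by
    intro x
    exact π.map_isConj (hconjA.symm.trans
      (isConj_JJ two_ne i hi _ (MM_sq (ζ ^ ((x.val : ℤ))))))
  constructor
  · exact ⟨f, hf_inj, hconj, hf_rack⟩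
  · -- type D
    have hdvd : (2 : ℕ) ∣ N := ⟨N / 2, by omega⟩
    set φ : ZMod N →+* ZMod 2 := ZMod.castHom hdvd (ZMod 2) with hφdef
    have hφ2 : φ (2 : ZMod N) = 0 := by
      rw [show (2 : ZMod N) = 1 + 1 by norm_num, _root_.map_add, _root_.map_one]
      decide
    have hφkey : ∀ x y : ZMod N, φ (2 * x - y) = φ y := by
      intro x y
      rw [_root_.map_sub, _root_.map_mul, hφ2, zero_mul, zero_sub, CharTwo.neg_eq]
    refine ⟨f '' (φ ⁻¹' {0}), f '' (φ ⁻¹' {1}), ?_, ?_, ?_, ?_, ?_, ?_, ?_, ?_, ?_, ?_⟩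
    · rintro _ ⟨x, -, rfl⟩
      exact hconj x
    · rintro _ ⟨x, -, rfl⟩
      exact hconj x
    · exact ⟨f 0, 0, by simp, rfl⟩
    · refine ⟨f 1, 1, ?_, rfl⟩
      rw [Set.mem_preimage, Set.mem_singleton_iff, _root_.map_one]
    · rw [Set.disjoint_left]
      rintro _ ⟨x, hx, rfl⟩ ⟨y, hy, hxy⟩
      rw [Set.mem_preimage, Set.mem_singleton_iff] at hx hy
      cases hf_inj hxy
      rw [hx] at hy
      exact absurd hy (by decide)
    · rintro _ ⟨x, hx, rfl⟩ _ ⟨y, hy, rfl⟩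
      rw [Set.mem_preimage, Set.mem_singleton_iff] at hx hy
      show f x * f y * (f x)⁻¹ ∈ _
      rw [hf_rack]
      exact ⟨2 * x - y,
        by rw [Set.mem_preimage, Set.mem_singleton_iff, hφkey, hy], rfl⟩
    · rintro _ ⟨x, hx, rfl⟩ _ ⟨y, hy, rfl⟩
      rw [Set.mem_preimage, Set.mem_singleton_iff] at hx hy
      show f x * f y * (f x)⁻¹ ∈ _
      rw [hf_rack]
      exact ⟨2 * x - y,
        by rw [Set.mem_preimage, Set.mem_singleton_iff, hφkey, hy], rfl⟩
    · rintro _ ⟨x, hx, rfl⟩ _ ⟨y, hy, rfl⟩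
      rw [Set.mem_preimage, Set.mem_singleton_iff] at hx hy
      show f x * f y * (f x)⁻¹ ∈ _
      rw [hf_rack]
      exact ⟨2 * x - y,
        by rw [Set.mem_preimage, Set.mem_singleton_iff, hφkey, hy], rfl⟩
    · rintro _ ⟨x, hx, rfl⟩ _ ⟨y, hy, rfl⟩
      rw [Set.mem_preimage, Set.mem_singleton_iff] at hx hy
      show f x * f y * (f x)⁻¹ ∈ _
      rw [hf_rack]
      exact ⟨2 * x - y,
        by rw [Set.mem_preimage, Set.mem_singleton_iff, hφkey, hy], rfl⟩
    · refine ⟨f 0, ⟨0, by simp, rfl⟩, f 1,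
        ⟨1, by rw [Set.mem_preimage, Set.mem_singleton_iff, _root_.map_one], rfl⟩, ?_⟩
      show f 0 * (f 1 * (f 0 * f 1 * (f 0)⁻¹) * (f 1)⁻¹) * (f 0)⁻¹ ≠ f 1
      rw [hf_rack, hf_rack, hf_rack]
      intro hcontra
      have h5 := hf_inj hcontra
      have h4 : ((4 : ℕ) : ZMod N) = 0 := by
        push_cast
        linear_combination -h5
      rw [ZMod.natCast_eq_zero_iff] at h4
      have := Nat.le_of_dvd (by norm_num) h4
      omega
end

section
/- Let n > 1, q a prime power, a ∈ 𝔽_q^×, and let ξ generate 𝔽_q^×. For x = (x_1, …, x_n) ∈ (ℤ/(q−1))ⁿ with Σ x_i ≡ 0, let μ_x = n_a · diag(ξ^{x_1}, …, ξ^{x_n}) where n_a is the companion matrix of Xⁿ − a. Then μ_x μ_y μ_x^{-1} = μ_{x ▷ y} where x ▷ y = (x_1 + y_n − x_n, x_2 + y_1 − x_1, …, x_n + y_{n−1} − x_{n−1}); consequently the set X_{a,ξ} = {μ_x : Σ x_i ≡ 0 (mod q−1)} is a subrack of GL(n, 𝔽_q) isomorphic to the affine rack ((ℤ/(q−1))^{n−1},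 g) with g(x_1,…,x_{n−1}) = (−Σ_{i=1}^{n−1} x_i, x_1, …, x_{n−2}). -/
/-- Let `ξ` generate `𝔽_qˣ`, `a ∈ 𝔽_qˣ`, `n > 1`, and for
`x ∈ (ℤ/(q−1))ⁿ` let `μ_x = n_a · diag(ξ^{x_1}, …, ξ^{x_n})`, where `n_a` is the
companion matrix of `Xⁿ − a`. Then `μ_x μ_y μ_x⁻¹ = μ_{x ▷ y}` with
`(x ▷ y)_i = x_i + y_{i−1} − x_{i−1}` (indices mod `n`); consequently
`X_{a,ξ} = {μ_x : Σ x_i = 0}` is a subrack of `GL(n, 𝔽_q)` isomorphic (via the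
first `n−1` coordinates) to the affine rack `((ℤ/(q−1))^{n−1}, g)` with
`g(x_1,…,x_{n−1}) = (−Σ x_i, x_1, …, x_{n−2})`. -/
theorem companion_class_affine_subrack
    {F : Type*} [Field F] [Fintype F] [DecidableEq F]
    (n : ℕ) [NeZero n] [NeZero (n - 1)] (hn : 1 < n)
    (ξ : Fˣ) (hξ : orderOf ξ = Fintype.card F - 1) (a : Fˣ) :
    let N := Fintype.card F - 1
    let na : Matrix (Fin n) (Fin n) F := fun i j =>
      if (i : ℕ) = (j : ℕ) + 1 then 1
      else if (i : ℕ) = 0 ∧ (j : ℕ) = n - 1 then (a : F) else 0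
    let μ : (Fin n → ZMod N) → Matrix (Fin n) (Fin n) F := fun x =>
      na * Matrix.diagonal (fun i => ((ξ ^ (x i).val : Fˣ) : F))
    let tri : (Fin n → ZMod N) → (Fin n → ZMod N) → (Fin n → ZMod N) :=
      fun x y i => x i + y (i - 1) - x (i - 1)
    let S : Set (Fin n → ZMod N) := {x | ∑ i, x i = 0}
    let ψ : (Fin n → ZMod N) → (Fin (n - 1) → ZMod N) := fun x j =>
      x (Fin.castLE (Nat.sub_le n 1) j)
    let g : (Fin (n - 1) → ZMod N) → (Fin (n - 1) → ZMod N) := fun v i =>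
      if (i : ℕ) = 0 then -(∑ j, v j) else v (i - 1)
    -- conjugation identity: `μ_x μ_y = μ_{x ▷ y} μ_x`
    (∀ x y : Fin n → ZMod N, μ x * μ y = μ (tri x y) * μ x) ∧
    -- `X_{a,ξ}` is a subrack: `S` is closed under `▷` and `μ` is injective on `S`
    (∀ x ∈ S, ∀ y ∈ S, tri x y ∈ S) ∧
    Set.InjOn μ S ∧
    -- each `μ_x` is invertible, i.e. lies in `GL(n, 𝔽_q)`
    (∀ x : Fin n → ZMod N, IsUnit (μ x)) ∧
    -- `ψ` is a rack isomorphism from `(S, tri)` onto the affine rack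
    -- `((ℤ/(q−1))^{n−1}, g)`, with `g` an automorphism
    Set.BijOn ψ S Set.univ ∧
    Function.Bijective g ∧
    (∀ v w : Fin (n - 1) → ZMod N, g (v + w) = g v + g w) ∧
    (∀ x ∈ S, ∀ y ∈ S, ψ (tri x y) = ψ x - g (ψ x) + g (ψ y)) := by
  obtain ⟨k, rfl⟩ : ∃ k, n = k + 2 := ⟨n - 2, by omega⟩
  intro N na μ tri S ψ g
  have hNcard : N = Fintype.card F - 1 := rfl
  have hN1 : 1 ≤ N := by
    have := Fintype.one_lt_card (α := F)
    omega
  haveI : NeZero N := ⟨by omega⟩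
  have hordN : orderOf ξ = N := hξ
  set E : ZMod N → Fˣ := fun p => ξ ^ p.val with hEdef
  have hEadd : ∀ p q : ZMod N, E (p + q) = E p * E q := by
    intro p q
    show ξ ^ (p + q).val = ξ ^ p.val * ξ ^ q.val
    rw [← pow_add, ZMod.val_add]
    have := pow_mod_orderOf ξ (p.val + q.val)
    rw [hordN] at this
    exact this
  have key : ∀ u v w : ZMod N, E u * E v = E (u + v - w) * E w := by
    intro u v w
    conv_rhs => rw [← hEadd, sub_add_cancel]
    rw [hEadd]
  have hEinj : Function.Injective E := by
    intro p q h
    have h1 : p.val < orderOf ξ := by rw [hordN]; exact ZMod.val_lt p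
    have h2 : q.val < orderOf ξ := by rw [hordN]; exact ZMod.val_lt q
    exact ZMod.val_injective N (pow_injOn_Iio_orderOf h1 h2 h)
  have hsub1 : ∀ (p : ℕ) (i : Fin (p + 1)), ((i - 1 : Fin (p + 1)) : ℕ) =
      if (i : ℕ) = 0 then p else (i : ℕ) - 1 := by
    intro p i
    rw [Fin.coe_sub_one]
    simp only [Fin.ext_iff, Fin.val_zero]
  set c : (Fin (k + 2) → ZMod N) → Fin (k + 2) → F :=
    fun x i => (if (i : ℕ) = 0 then (a : F) else 1) * ((E (x (i - 1)) : Fˣ) : F) with hcdef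
  have hcne : ∀ x i, c x i ≠ 0 := by
    intro x i
    apply mul_ne_zero
    · split <;> simp
    · exact Units.ne_zero _
  have hna : ∀ i j : Fin (k + 2), na i j =
      if j = i - 1 then (if (i : ℕ) = 0 then (a : F) else 1) else 0 := by
    intro i j
    show (if (i : ℕ) = (j : ℕ) + 1 then (1 : F)
      else if (i : ℕ) = 0 ∧ (j : ℕ) = k + 2 - 1 then (a : F) else 0) = _
    have hi := i.isLt
    have hj := j.isLt
    have hs := hsub1 (k + 1) i
    by_cases h : j = i - 1
    · have hjv : (j : ℕ) = if (i : ℕ) = 0 then k + 1 else (i : ℕ) - 1 := by rw [h, hs]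
      rw [if_pos h]
      by_cases h0 : (i : ℕ) = 0
      · rw [if_pos h0] at hjv
        rw [if_pos h0, if_neg (by omega), if_pos ⟨h0, by omega⟩]
      · rw [if_neg h0] at hjv
        rw [if_neg h0, if_pos (by omega)]
    · have hjv : (j : ℕ) ≠ if (i : ℕ) = 0 then k + 1 else (i : ℕ) - 1 := by
        intro hcon
        exact h (Fin.ext (by rw [hs]; exact hcon))
      rw [if_neg h, if_neg (by split_ifs at hjv <;> omega),
        if_neg (by rintro ⟨h0, h1⟩; rw [if_pos h0] at hjv; omega)]
  have hμ : ∀ (x : Fin (k + 2) → ZMod N) (i j : Fin (k + 2)),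
      μ x i j = if j = i - 1 then c x i else 0 := by
    intro x i j
    show (na * Matrix.diagonal fun t => ((ξ ^ (x t).val : Fˣ) : F)) i j = _
    rw [Matrix.mul_diagonal, hna]
    by_cases h : j = i - 1
    · rw [if_pos h, if_pos h, hcdef, h]
    · rw [if_neg h, if_neg h, zero_mul]
  have hmulE : ∀ (A B : Matrix (Fin (k + 2)) (Fin (k + 2)) F)
      (f g : Fin (k + 2) → F),
      (∀ i j, A i j = if j = i - 1 then f i else 0) →
      (∀ i j, B i j = if j = i - 1 then g i else 0) →
      ∀ i j, (A * B) i j = if j = i - 1 - 1 then f i * g (i - 1) else 0 := by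
    intro A B f g hA hB i j
    rw [Matrix.mul_apply, Finset.sum_eq_single (i - 1)]
    · rw [hA, if_pos rfl, hB]
      by_cases h : j = i - 1 - 1
      · rw [if_pos h, if_pos h]
      · rw [if_neg h, if_neg h, mul_zero]
    · intro b _ hb
      rw [hA, if_neg hb, zero_mul]
    · intro h
      exact absurd (Finset.mem_univ _) h
  have hgdef : ∀ (v : Fin (k + 2 - 1) → ZMod N) (i : Fin (k + 2 - 1)),
      g v i = if (i : ℕ) = 0 then -(∑ j, v j) else v (i - 1) := fun _ _ => rfl
  have hsplit : ∀ x : Fin (k + 2) → ZMod N,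
      ∑ i, x i = (∑ t : Fin (k + 2 - 1), ψ x t) + x (Fin.last (k + 1)) := by
    intro x
    exact Fin.sum_univ_castSucc (n := k + 1) (f := x)
  refine ⟨?_, ?_, ?_, ?_, ?_, ?_, ?_, ?_⟩
  · -- conjugation identity
    intro x y
    ext i j
    rw [hmulE (μ x) (μ y) (c x) (c y) (hμ x) (hμ y),
        hmulE (μ (tri x y)) (μ x) (c (tri x y)) (c x) (hμ (tri x y)) (hμ x)]
    by_cases h : j = i - 1 - 1
    · rw [if_pos h, if_pos h]
      simp only [hcdef]
      have htri1 : tri x y (i - 1) = x (i - 1) + y (i - 1 - 1) - x (i - 1 - 1) := rfl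
      rw [htri1]
      have h2 := congrArg (Units.val) (key (x (i - 1)) (y (i - 1 - 1)) (x (i - 1 - 1)))
      push_cast at h2
      linear_combination ((if ((i : ℕ)) = 0 then (a : F) else 1) *
        (if (((i - 1 : Fin (k + 2)) : ℕ)) = 0 then (a : F) else 1)) * h2
    · rw [if_neg h, if_neg h]
  · -- S closed under tri
    intro x hx y hy
    have hx' : ∑ i, x i = 0 := hx
    have hy' : ∑ i, y i = 0 := hy
    show ∑ i, (x i + y (i - 1) - x (i - 1)) = 0
    have e1 : ∑ i : Fin (k + 2), y (i - 1) = ∑ i, y i :=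
      Fintype.sum_equiv (Equiv.subRight 1) _ _ (fun i => by simp)
    have e2 : ∑ i : Fin (k + 2), x (i - 1) = ∑ i, x i :=
      Fintype.sum_equiv (Equiv.subRight 1) _ _ (fun i => by simp)
    rw [Finset.sum_sub_distrib, Finset.sum_add_distrib, e1, e2, hx', hy']
    simp
  · -- InjOn μ S
    intro x _ y _ hxy
    funext t
    have h1 : μ x (t + 1) ((t + 1) - 1) = μ y (t + 1) ((t + 1) - 1) := by rw [hxy]
    rw [hμ, hμ, if_pos rfl, if_pos rfl] at h1
    simp only [hcdef, add_sub_cancel_right] at h1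
    have h2 := mul_left_cancel₀ (a := (if (((t + 1 : Fin (k + 2)) : ℕ)) = 0 then (a : F) else 1))
      (by split <;> simp) h1
    exact hEinj (Units.ext h2)
  · -- invertibility
    intro x
    rw [Matrix.isUnit_iff_isUnit_det]
    apply Matrix.isUnit_det_of_right_inverse
      (B := Matrix.of fun i j => if i = j - 1 then (c x j)⁻¹ else 0)
    ext i j
    rw [Matrix.mul_apply, Finset.sum_eq_single (i - 1)]
    · rw [hμ, if_pos rfl, Matrix.of_apply]
      by_cases h : i = j
      · subst h
        rw [if_pos rfl, Matrix.one_apply_eq, mul_inv_cancel₀ (hcne x i)]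
      · rw [if_neg (fun hc => h (sub_left_inj.mp hc)), Matrix.one_apply_ne h, mul_zero]
    · intro b _ hb
      rw [hμ, if_neg hb, zero_mul]
    · intro h
      exact absurd (Finset.mem_univ _) h
  · -- BijOn ψ
    refine ⟨fun x _ => trivial, ?_, ?_⟩
    · intro x hx y hy h
      have hx' : ∑ i, x i = 0 := hx
      have hy' : ∑ i, y i = 0 := hy
      have hlast : x (Fin.last (k + 1)) = y (Fin.last (k + 1)) := by
        have ex := hsplit x
        have ey := hsplit y
        rw [hx'] at ex
        rw [hy', ← h] at ey
        exact add_left_cancel (ex.symm.trans ey)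
      funext t
      by_cases ht : (t : ℕ) < k + 1
      · exact congrFun h (⟨t.val, by omega⟩ : Fin (k + 2 - 1))
      · have htl : t = Fin.last (k + 1) := Fin.ext (by have := t.isLt; simp only [Fin.val_last]; omega)
        rw [htl]
        exact hlast
    · intro v _
      set X : Fin (k + 2) → ZMod N :=
        fun i => if h : (i : ℕ) < k + 1 then v ⟨i.val, by omega⟩ else -(∑ j, v j) with hXdef
      have hψX : ∀ t : Fin (k + 2 - 1), ψ X t = v t := by
        intro t
        have ht : ((Fin.castLE (Nat.sub_le (k + 2) 1) t : Fin (k + 2)) : ℕ) < k + 1 := by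
          have := t.isLt
          simp only [Fin.coe_castLE]
          omega
        exact (dif_pos ht).trans (congrArg v (Fin.ext rfl))
      refine ⟨X, ?_, funext hψX⟩
      show ∑ i, X i = 0
      rw [hsplit X, show X (Fin.last (k + 1)) = -(∑ j, v j) from dif_neg (by simp),
        show (∑ t, ψ X t) = ∑ t, v t from Finset.sum_congr rfl fun t _ => hψX t]
      exact add_neg_cancel _
  · -- g bijective
    have hsum' : ∀ u : Fin (k + 2 - 1) → ZMod N,
        ∑ j, u j = (∑ t : Fin k, u (Fin.castSucc t)) + u (Fin.last k) :=
      fun u => Fin.sum_univ_castSucc (n := k) (f := u)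
    have hginj : Function.Injective g := by
      intro v w h
      have h0 : ∑ j, v j = ∑ j, w j := by
        have h1 := congrFun h (⟨0, by omega⟩ : Fin (k + 2 - 1))
        rw [hgdef, hgdef, if_pos rfl, if_pos rfl] at h1
        exact neg_inj.mp h1
      have hrest : ∀ j : Fin (k + 2 - 1), (j : ℕ) < k → v j = w j := by
        intro j hj
        have h1 := congrFun h (⟨j.val + 1, by omega⟩ : Fin (k + 2 - 1))
        rw [hgdef, hgdef, if_neg (by simp), if_neg (by simp)] at h1
        have he : (⟨j.val + 1, by omega⟩ : Fin (k + 2 - 1)) - 1 = j :=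
          Fin.ext (by rw [hsub1 k]; simp)
        rwa [he] at h1
      funext j
      by_cases hj : (j : ℕ) < k
      · exact hrest j hj
      · have hjl : j = Fin.last k := Fin.ext (by have := j.isLt; simp only [Fin.val_last]; omega)
        have h1 := h0
        rw [hsum' v, hsum' w,
          show (∑ t : Fin k, v (Fin.castSucc t)) = ∑ t : Fin k, w (Fin.castSucc t) from
            Finset.sum_congr rfl fun t _ => hrest _ (by simp)] at h1
        rw [hjl]
        exact add_left_cancel h1
    exact (Finite.injective_iff_bijective).mp hginj
  · -- additivity of g
    intro v w
    funext i
    rw [Pi.add_apply, hgdef, hgdef, hgdef]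
    split_ifs <;> simp [Finset.sum_add_distrib, neg_add, add_comm]
  · -- rack isomorphism identity
    intro x hx y hy
    have hx' : ∑ i, x i = 0 := hx
    have hy' : ∑ i, y i = 0 := hy
    have hxl : x (Fin.last (k + 1)) = -(∑ t, ψ x t) := by
      have h2 := (hsplit x).symm.trans hx'
      rw [add_comm] at h2
      exact add_eq_zero_iff_eq_neg.mp h2
    have hyl : y (Fin.last (k + 1)) = -(∑ t, ψ y t) := by
      have h2 := (hsplit y).symm.trans hy'
      rw [add_comm] at h2
      exact add_eq_zero_iff_eq_neg.mp h2
    funext j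
    have hJ : ψ (tri x y) j =
        x (Fin.castLE (Nat.sub_le (k + 2) 1) j)
        + y (Fin.castLE (Nat.sub_le (k + 2) 1) j - 1)
        - x (Fin.castLE (Nat.sub_le (k + 2) 1) j - 1) := rfl
    have hRHS : (ψ x - g (ψ x) + g (ψ y)) j = ψ x j - g (ψ x) j + g (ψ y) j := rfl
    rw [hJ, hRHS, hgdef, hgdef]
    by_cases h0 : (j : ℕ) = 0
    · rw [if_pos h0, if_pos h0]
      have hJl : (Fin.castLE (Nat.sub_le (k + 2) 1) j : Fin (k + 2)) - 1 = Fin.last (k + 1) := by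
        apply Fin.ext
        rw [hsub1 (k + 1)]
        simp [h0]
      rw [hJl, hxl, hyl]
      have hψj : ψ x j = x (Fin.castLE (Nat.sub_le (k + 2) 1) j) := rfl
      rw [hψj]
      ring
    · rw [if_neg h0, if_neg h0]
      have hJl : (Fin.castLE (Nat.sub_le (k + 2) 1) (j - 1) : Fin (k + 2)) =
          Fin.castLE (Nat.sub_le (k + 2) 1) j - 1 := by
        apply Fin.ext
        have hcoe : ((Fin.castLE (Nat.sub_le (k + 2) 1) j : Fin (k + 2)) : ℕ) = (j : ℕ) := rfl
        have hcoe2 : ((Fin.castLE (Nat.sub_le (k + 2) 1) (j - 1) : Fin (k + 2)) : ℕ) =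
            ((j - 1 : Fin (k + 2 - 1)) : ℕ) := rfl
        rw [hcoe2, hsub1 k, hsub1 (k + 1), hcoe, if_neg h0, if_neg h0]
      have hψ1 : ψ x (j - 1) = x (Fin.castLE (Nat.sub_le (k + 2) 1) (j - 1)) := rfl
      have hψ2 : ψ y (j - 1) = y (Fin.castLE (Nat.sub_le (k + 2) 1) (j - 1)) := rfl
      have hψj : ψ x j = x (Fin.castLE (Nat.sub_le (k + 2) 1) j) := rfl
      rw [hψ1, hψ2, hψj, hJl]
      ring
end

section
/- Let G be a finite group with 𝔽_q-split torus T and Weyl group element σ with representative n_σ ∈ N_G(T), acting on (ℤ/(q−1))ⁿ via an automorphism g_σ (defined by n_σ ξ_x n_σ^{-1} = ξ_{g_σ(x)}). Then the set X_{σ,ξ} = {n_σ ξ_x : x ∈ (ℤ/(q−1))ⁿ} is closed under conjugation and the map n_σ ξ_x ↦ x is a rack isomorphism from X_{σ,ξ} (with conjugation) onto the affine rack ((ℤ/(q−1))ⁿ, g_σ), where x ▷ y = g_σ(y) + (1 − g_σ)(x). -/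
/-- Let `G` be a finite group, `T ≅ (ℤ/(q−1))ⁿ` a split torus
embedded via `x ↦ ξ_x`, and `n_σ` a representative of a Weyl group element `σ`
acting on `(ℤ/(q−1))ⁿ` by the automorphism `g_σ` (so that
`n_σ ξ_x n_σ⁻¹ = ξ_{g_σ x}`). Then the set `X_{σ,ξ} = {n_σ ξ_x}` is closed under
conjugation and `n_σ ξ_x ↦ x` is a rack isomorphism onto the affine rack
`((ℤ/(q−1))ⁿ, g_σ)`, i.e. conjugation corresponds to
`x ▷ y = (1 − g_σ)(x) + g_σ(y)`. -/
theorem weyl_element_class_affine_subrack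
    {G : Type*} [Group G] [Fintype G] (n q : ℕ)
    (ξ : (Fin n → ZMod (q - 1)) → G)
    (hξmul : ∀ x y, ξ (x + y) = ξ x * ξ y)
    (hξinj : Function.Injective ξ)
    (nσ : G) (gσ : (Fin n → ZMod (q - 1)) ≃+ (Fin n → ZMod (q - 1)))
    (hσ : ∀ x, nσ * ξ x * nσ⁻¹ = ξ (gσ x)) :
    let Xσ : Set G := {h | ∃ x, h = nσ * ξ x}
    (∀ a ∈ Xσ, ∀ b ∈ Xσ, a * b * a⁻¹ ∈ Xσ) ∧
    Function.Injective (fun x : Fin n → ZMod (q - 1) => nσ * ξ x) ∧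
    (∀ x y : Fin n → ZMod (q - 1),
      (nσ * ξ x) * (nσ * ξ y) * (nσ * ξ x)⁻¹ = nσ * ξ (x - gσ x + gσ y)) := by
  intro Xσ
  have hξ0 : ξ 0 = 1 := by
    have := hξmul 0 0
    rw [add_zero] at this
    exact (mul_eq_left.mp this.symm)
  have hξinv : ∀ x, ξ (-x) = (ξ x)⁻¹ := by
    intro x
    have h1 : ξ x * ξ (-x) = 1 := by rw [← hξmul, add_neg_cancel, hξ0]
    exact inv_eq_of_mul_eq_one_right h1 ▸ rfl
  have hconj : ∀ x y : Fin n → ZMod (q - 1),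
      (nσ * ξ x) * (nσ * ξ y) * (nσ * ξ x)⁻¹ = nσ * ξ (x - gσ x + gσ y) := by
    intro x y
    have key : nσ * ξ (y - x) * nσ⁻¹ = ξ (gσ (y - x)) := hσ _
    have hyx : ξ (y - x) = ξ y * (ξ x)⁻¹ := by
      rw [← hξinv, ← hξmul, sub_eq_add_neg]
    have step : (nσ * ξ x) * (nσ * ξ y) * (nσ * ξ x)⁻¹
        = nσ * (ξ x * (nσ * ξ (y - x) * nσ⁻¹)) := by
      rw [hyx]; group
    rw [step, key, ← hξmul]
    congr 1
    rw [map_sub]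
    ring
  refine ⟨?_, ?_, hconj⟩
  · rintro a ⟨x, rfl⟩ b ⟨y, rfl⟩
    exact ⟨x - gσ x + gσ y, hconj x y⟩
  · intro x y h
    simp only [mul_right_inj] at h
    exact hξinj h
end

section
/- Let K be a subgroup of a finite group G and κ ∈ C_G(K) (the centralizer of K in G). Let τ ∈ K, let O be the conjugacy class of τ in K and Õ the conjugacy class of τκ in G. Then the map R_κ : O → Õ, g ↦ gκ, is well-defined and is an injective morphism of racks (with both sides carrying the conjugation rack structure). Consequently, if O is of type D as a rack, then so is Õ. -/
/-- For `K ≤ G`, `κ` centralizing `K`, `τ ∈ K`, the map `g ↦ gκ`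
identifies the conjugacy class `O` of `τ` in `K` with a subrack of the conjugacy
class `Õ` of `τκ` in `G`; it is injective and a rack morphism, and if `O` is of
type D then so is `Õ`. -/
theorem subrack_via_central_element_typeD {G : Type*} [Group G] [Fintype G]
    (K : Subgroup G) (κ : G) (hκ : κ ∈ Subgroup.centralizer (K : Set G))
    (τ : G) (hτ : τ ∈ K) :
    let O : Set G := {k | ∃ g ∈ K, g * τ * g⁻¹ = k}
    let Otilde : Set G := {h | IsConj (τ * κ) h}
    let conjOp : G → G → G := fun a b => a * b * a⁻¹
    (∀ x ∈ O, x * κ ∈ Otilde) ∧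
    Set.InjOn (fun x : G => x * κ) O ∧
    (∀ x ∈ O, ∀ y ∈ O, conjOp (x * κ) (y * κ) = (conjOp x y) * κ) ∧
    (IsTypeD conjOp O → IsTypeD conjOp Otilde) := by
  intro O Otilde conjOp
  -- κ commutes with every element of K
  have hcomm : ∀ g ∈ K, g * κ = κ * g := fun g hg =>
    (Subgroup.mem_centralizer_iff.mp hκ g hg)
  have hOmemK : ∀ x ∈ O, x ∈ K := by
    rintro x ⟨g, hg, rfl⟩
    exact K.mul_mem (K.mul_mem hg hτ) (K.inv_mem hg)
  have hwd : ∀ x ∈ O, x * κ ∈ Otilde := by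
    rintro x ⟨g, hg, rfl⟩
    rw [Set.mem_setOf_eq, isConj_iff]
    refine ⟨g, ?_⟩
    have h1 : κ * g⁻¹ = g⁻¹ * κ := (hcomm g⁻¹ (K.inv_mem hg)).symm
    calc g * (τ * κ) * g⁻¹ = g * τ * (κ * g⁻¹) := by group
    _ = g * τ * (g⁻¹ * κ) := by rw [h1]
    _ = g * τ * g⁻¹ * κ := by group
  have hinj : Set.InjOn (fun x : G => x * κ) O := fun x _ y _ h =>
    mul_right_cancel h
  have hmor : ∀ x ∈ O, ∀ y ∈ O, conjOp (x * κ) (y * κ) = (conjOp x y) * κ := by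
    intro x hx y hy
    have hxκ : x * κ = κ * x := hcomm x (hOmemK x hx)
    simp only [conjOp]
    rw [mul_inv_rev, show x * κ * (y * κ) * (κ⁻¹ * x⁻¹) = x * (κ * y) * x⁻¹ by group,
        ← hcomm y (hOmemK y hy)]
    rw [show x * (y * κ) * x⁻¹ = x * y * (κ * x⁻¹) by group,
        ← hcomm x⁻¹ (K.inv_mem (hOmemK x hx))]
    group
  refine ⟨hwd, hinj, hmor, ?_⟩
  rintro ⟨R, S, hRO, hSO, hRne, hSne, hdisj, hRR, hSS, hRS, hSR, r, hr, s, hs, hne⟩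
  refine ⟨(fun x => x * κ) '' R, (fun x => x * κ) '' S, ?_, ?_, hRne.image _,
    hSne.image _, ?_, ?_, ?_, ?_, ?_, r * κ, ⟨r, hr, rfl⟩, s * κ, ⟨s, hs, rfl⟩, ?_⟩
  · rintro _ ⟨a, ha, rfl⟩; exact hwd a (hRO ha)
  · rintro _ ⟨a, ha, rfl⟩; exact hwd a (hSO ha)
  · rw [Set.disjoint_left]
    rintro _ ⟨a, ha, rfl⟩ ⟨b, hb, hab⟩
    have : b = a := mul_right_cancel hab
    subst this
    exact Set.disjoint_left.mp hdisj ha hb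
  · rintro _ ⟨a, ha, rfl⟩ _ ⟨b, hb, rfl⟩
    rw [hmor a (hRO ha) b (hRO hb)]
    exact ⟨conjOp a b, hRR a ha b hb, rfl⟩
  · rintro _ ⟨a, ha, rfl⟩ _ ⟨b, hb, rfl⟩
    rw [hmor a (hSO ha) b (hSO hb)]
    exact ⟨conjOp a b, hSS a ha b hb, rfl⟩
  · rintro _ ⟨a, ha, rfl⟩ _ ⟨b, hb, rfl⟩
    rw [hmor a (hRO ha) b (hSO hb)]
    exact ⟨conjOp a b, hRS a ha b hb, rfl⟩
  · rintro _ ⟨a, ha, rfl⟩ _ ⟨b, hb, rfl⟩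
    rw [hmor a (hSO ha) b (hRO hb)]
    exact ⟨conjOp a b, hSR a ha b hb, rfl⟩
  · have h1 : conjOp r s ∈ O := hSO (hRS r hr s hs)
    have h2 : conjOp s (conjOp r s) ∈ O := hSO (hSS s hs _ (hRS r hr s hs))
    rw [hmor r (hRO hr) s (hSO hs), hmor s (hSO hs) _ h1, hmor r (hRO hr) _ h2]
    intro h
    exact hne (mul_right_cancel h)
end
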